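/- In a triple vector bundle E, if e, e' ∈ E have exactly the same outline (the same projections to all lower faces and edges), then there exists a unique ultracore element u ∈ E_{123} such that e -_{1,3} e' = 0̂_{e_{1,3}} +_{1,2} (0̂_{e_1} +_{2,3} u) = 0̂_{e_{1,3}} +_{2,3} (0̂_{e_3} +_{1,2} u), and the analogous formulas hold for e -_{1,2} e' and e -_{2,3} e' with the same u. -/

import Mathlib

/-! Algebraic model of (double) vector bundles.

A `PreVB E B` is a vector bundle structure on `E` over the base `B`, recorded
through its structure maps (projection, fibrewise addition, scalar
multiplication by reals, zero section and fibrewise negation) together with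
the usual axioms, all stated for elements lying in a common fibre. -/

structure PreVB (E : Type*) (B : Type*) where
  π : E → B
  add : E → E → E
  smul : ℝ → E → E
  neg : E → E
  zero : B → E
  π_zero : ∀ b, π (zero b) = b
  π_add : ∀ e e', π e = π e' → π (add e e') = π e
  π_smul : ∀ t e, π (smul t e) = π e
  π_neg : ∀ e, π (neg e) = π e
  add_zero : ∀ e, add e (zero (π e)) = e
  zero_add : ∀ e, add (zero (π e)) e = e
  add_comm : ∀ e e', π e = π e' → add e e' = add e' e
  add_assoc : ∀ e₁ e₂ e₃, π e₁ = π e₂ → π e₂ = π e₃ →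
    add (add e₁ e₂) e₃ = add e₁ (add e₂ e₃)
  add_neg : ∀ e, add e (neg e) = zero (π e)
  one_smul : ∀ e, smul 1 e = e
  smul_zero : ∀ t b, smul t (zero b) = zero b
  smul_add : ∀ t e e', π e = π e' → smul t (add e e') = add (smul t e) (smul t e')
  add_smul : ∀ t s e, smul (t + s) e = add (smul t e) (smul s e)
  mul_smul : ∀ t s e, smul (t * s) e = smul t (smul s e)

/-- Fibrewise subtraction. -/
def PreVB.sub {E B : Type*} (V : PreVB E B) (e e' : E) : E := V.add e (V.neg e')

/-- An (algebraic model of a) double vector bundle `(D; A, B; M)`: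
two vector bundle structures on `D`, over the vector bundles `A → M` and
`B → M`, which commute in the categorical sense: each structure map of either
structure on `D` is a morphism of vector bundles with respect to the other
structure.  The field `core_exists` records that the core acts freely and
transitively on the fibres of `D → A ×_M B` (it follows, for genuine double
vector bundles, from `D → A ×_M B` being a surjective submersion). -/
structure DVB (D : Type*) (A : Type*) (B : Type*) (M : Type*) where
  bA : PreVB A M
  bB : PreVB B M
  vA : PreVB D A
  vB : PreVB D B
  proj_compat : ∀ d, bA.π (vA.π d) = bB.π (vB.π d)
  πB_addA : ∀ d d', vA.π d = vA.π d' → vB.π (vA.add d d') = bB.add (vB.π d) (vB.π d')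
  πA_addB : ∀ d d', vB.π d = vB.π d' → vA.π (vB.add d d') = bA.add (vA.π d) (vA.π d')
  πB_smulA : ∀ t d, vB.π (vA.smul t d) = bB.smul t (vB.π d)
  πA_smulB : ∀ t d, vA.π (vB.smul t d) = bA.smul t (vA.π d)
  πB_negA : ∀ d, vB.π (vA.neg d) = bB.neg (vB.π d)
  πA_negB : ∀ d, vA.π (vB.neg d) = bA.neg (vA.π d)
  πB_zeroA : ∀ a, vB.π (vA.zero a) = bB.zero (bA.π a)
  πA_zeroB : ∀ b, vA.π (vB.zero b) = bA.zero (bB.π b)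
  zeroA_add : ∀ a a', bA.π a = bA.π a' →
    vA.zero (bA.add a a') = vB.add (vA.zero a) (vA.zero a')
  zeroB_add : ∀ b b', bB.π b = bB.π b' →
    vB.zero (bB.add b b') = vA.add (vB.zero b) (vB.zero b')
  zeroA_smul : ∀ t a, vA.zero (bA.smul t a) = vB.smul t (vA.zero a)
  zeroB_smul : ∀ t b, vB.zero (bB.smul t b) = vA.smul t (vB.zero b)
  double_zero : ∀ m, vA.zero (bA.zero m) = vB.zero (bB.zero m)
  interchange : ∀ d₁ d₂ d₃ d₄,
    vA.π d₁ = vA.π d₂ → vA.π d₃ = vA.π d₄ →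
    vB.π d₁ = vB.π d₃ → vB.π d₂ = vB.π d₄ →
    vB.add (vA.add d₁ d₂) (vA.add d₃ d₄) = vA.add (vB.add d₁ d₃) (vB.add d₂ d₄)
  smulA_addB : ∀ t d d', vB.π d = vB.π d' →
    vA.smul t (vB.add d d') = vB.add (vA.smul t d) (vA.smul t d')
  smulB_addA : ∀ t d d', vA.π d = vA.π d' →
    vB.smul t (vA.add d d') = vA.add (vB.smul t d) (vB.smul t d')
  smul_smul : ∀ t s d, vA.smul t (vB.smul s d) = vB.smul s (vA.smul t d)
  core_exists : ∀ d d', vA.π d = vA.π d' → vB.π d = vB.π d' →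
    ∃! c : D, (vA.π c = bA.zero (bA.π (vA.π d)) ∧ vB.π c = bB.zero (bA.π (vA.π d))) ∧
      d = vA.add d' (vB.add c (vA.zero (vA.π d)))

/-- `d` is an element of the core of the double vector bundle, sitting over `m ∈ M`. -/
def DVB.CoreAt {D A B M : Type*} (V : DVB D A B M) (m : M) (d : D) : Prop :=
  V.vA.π d = V.bA.zero m ∧ V.vB.π d = V.bB.zero m

/-- A linear section `(ξ, X)` of the double vector bundle: `ξ : B → D` is a
section of `D → B` which is a morphism of vector bundles over `X : M → A`. -/
structure LinSecB {D A B M : Type*} (V : DVB D A B M) where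
  ξ : B → D
  X : M → A
  secX : ∀ m, V.bA.π (X m) = m
  proj : ∀ b, V.vB.π (ξ b) = b
  overX : ∀ b, V.vA.π (ξ b) = X (V.bB.π b)
  map_add : ∀ b b', V.bB.π b = V.bB.π b' →
    ξ (V.bB.add b b') = V.vA.add (ξ b) (ξ b')
  map_smul : ∀ t b, ξ (V.bB.smul t b) = V.vA.smul t (ξ b)

/-- A linear section `(η, Y)` of the other structure: `η : A → D` is a section
of `D → A` which is a morphism of vector bundles over `Y : M → B`. -/
structure LinSecA {D A B M : Type*} (V : DVB D A B M) where
  η : A → D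
  Y : M → B
  secY : ∀ m, V.bB.π (Y m) = m
  proj : ∀ a, V.vA.π (η a) = a
  overY : ∀ a, V.vB.π (η a) = Y (V.bA.π a)
  map_add : ∀ a a', V.bA.π a = V.bA.π a' →
    η (V.bA.add a a') = V.vB.add (η a) (η a')
  map_smul : ∀ t a, η (V.bA.smul t a) = V.vB.smul t (η a)

/-- `w : M → D` is (the core-valued function underlying) the warp of the grid
`((ξ, X), (η, Y))`:  pointwise it is a core element and satisfies
`ξ(Y(m)) -_A η(X(m)) = w(m) +_B 0̃_{X(m)}` and
`ξ(Y(m)) -_B η(X(m)) = w(m) +_A 0̃_{Y(m)}`. -/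
def DVB.IsWarp {D A B M : Type*} (V : DVB D A B M)
    (s : LinSecB V) (r : LinSecA V) (w : M → D) : Prop :=
  ∀ m : M, V.CoreAt m (w m) ∧
    V.vA.sub (s.ξ (r.Y m)) (r.η (s.X m)) = V.vB.add (w m) (V.vA.zero (s.X m)) ∧
    V.vB.sub (s.ξ (r.Y m)) (r.η (s.X m)) = V.vA.add (w m) (V.vB.zero (r.Y m))

/-! Algebraic model of triple vector bundles.

A triple vector bundle is a cube of vector bundle structures whose six faces
are double vector bundles; the structures shared between adjacent faces
coincide.  We record the six faces (with the intended identifications: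
`up : (E; E₁₃, E₂₃; E₃)`, `back : (E; E₁₂, E₁₃; E₁)`, `left : (E; E₁₂, E₂₃; E₂)`,
`down : (E₁₂; E₁, E₂; M)`, `right : (E₁₃; E₁, E₃; M)`, `front : (E₂₃; E₂, E₃; M)`)
together with the coherence conditions saying that the same bundle structure
is used whenever two faces share an edge, and that the iterated zero sections
over `E₁`, `E₂`, `E₃` agree. -/
structure TVB (E E12 E13 E23 E1 E2 E3 M : Type*) where
  up : DVB E E13 E23 E3
  back : DVB E E12 E13 E1
  left : DVB E E12 E23 E2
  down : DVB E12 E1 E2 M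
  right : DVB E13 E1 E3 M
  front : DVB E23 E2 E3 M
  coh_E_E12 : back.vA = left.vA
  coh_E_E13 : up.vA = back.vB
  coh_E_E23 : up.vB = left.vB
  coh_E12_E1 : back.bA = down.vA
  coh_E12_E2 : left.bA = down.vB
  coh_E13_E1 : back.bB = right.vA
  coh_E13_E3 : up.bA = right.vB
  coh_E23_E2 : left.bB = front.vA
  coh_E23_E3 : up.bB = front.vB
  coh_E1_M : down.bA = right.bA
  coh_E2_M : down.bB = front.bA
  coh_E3_M : right.bB = front.bB
  zero_coh_E1 : ∀ e1 : E1, back.vA.zero (down.vA.zero e1) = up.vA.zero (right.vA.zero e1)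
  zero_coh_E2 : ∀ e2 : E2, back.vA.zero (down.vB.zero e2) = up.vB.zero (front.vA.zero e2)
  zero_coh_E3 : ∀ e3 : E3, up.vA.zero (right.vB.zero e3) = up.vB.zero (front.vB.zero e3)

namespace TVB

variable {E E12 E13 E23 E1 E2 E3 M : Type*}

/-- The double zero `0̂_{e₁}` of `E` over `e₁ ∈ E₁`. -/
def zE1 (T : TVB E E12 E13 E23 E1 E2 E3 M) (e1 : E1) : E :=
  T.back.vA.zero (T.down.vA.zero e1)

/-- The double zero `0̂_{e₂}` of `E` over `e₂ ∈ E₂`. -/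
def zE2 (T : TVB E E12 E13 E23 E1 E2 E3 M) (e2 : E2) : E :=
  T.back.vA.zero (T.down.vB.zero e2)

/-- The double zero `0̂_{e₃}` of `E` over `e₃ ∈ E₃`. -/
def zE3 (T : TVB E E12 E13 E23 E1 E2 E3 M) (e3 : E3) : E :=
  T.up.vA.zero (T.right.vB.zero e3)

/-- The triple zero `⊙³_m` of `E` over `m ∈ M`. -/
def tripleZero (T : TVB E E12 E13 E23 E1 E2 E3 M) (m : M) : E :=
  T.up.vB.zero (T.front.vA.zero (T.front.bA.zero m))

/-- `e` belongs to the ultracore of `E`, over `m ∈ M`: all three projections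
of `e` are (double) zeros. -/
def UltracoreAt (T : TVB E E12 E13 E23 E1 E2 E3 M) (m : M) (e : E) : Prop :=
  T.back.vA.π e = T.down.vA.zero (T.down.bA.zero m) ∧
  T.up.vA.π e = T.right.vA.zero (T.right.bA.zero m) ∧
  T.up.vB.π e = T.front.vA.zero (T.front.bA.zero m)

end TVB

/-- A down-up linear double section `(Z_{1,2}; Z_1, Z_2; Z)` of a triple vector
bundle: a morphism of double vector bundles from the Down face to the Up
face. -/
structure DULinSec {E E12 E13 E23 E1 E2 E3 M : Type*}
    (T : TVB E E12 E13 E23 E1 E2 E3 M) where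
  z12 : E12 → E
  z1 : E1 → E13
  z2 : E2 → E23
  z : M → E3
  sec12 : ∀ p, T.back.vA.π (z12 p) = p
  over13 : ∀ p, T.up.vA.π (z12 p) = z1 (T.down.vA.π p)
  over23 : ∀ p, T.up.vB.π (z12 p) = z2 (T.down.vB.π p)
  sec1 : ∀ p, T.right.vA.π (z1 p) = p
  over1 : ∀ p, T.right.vB.π (z1 p) = z (T.right.bA.π p)
  sec2 : ∀ p, T.front.vA.π (z2 p) = p
  over2 : ∀ p, T.front.vB.π (z2 p) = z (T.front.bA.π p)
  secz : ∀ m, T.right.bB.π (z m) = m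
  map_add1 : ∀ p q, T.down.vA.π p = T.down.vA.π q →
    z12 (T.down.vA.add p q) = T.up.vA.add (z12 p) (z12 q)
  map_add2 : ∀ p q, T.down.vB.π p = T.down.vB.π q →
    z12 (T.down.vB.add p q) = T.up.vB.add (z12 p) (z12 q)
  map_smul1 : ∀ t p, z12 (T.down.vA.smul t p) = T.up.vA.smul t (z12 p)
  map_smul2 : ∀ t p, z12 (T.down.vB.smul t p) = T.up.vB.smul t (z12 p)
  z1_add : ∀ p q, T.right.bA.π p = T.right.bA.π q →
    z1 (T.right.bA.add p q) = T.right.vB.add (z1 p) (z1 q)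
  z1_smul : ∀ t p, z1 (T.right.bA.smul t p) = T.right.vB.smul t (z1 p)
  z2_add : ∀ p q, T.front.bA.π p = T.front.bA.π q →
    z2 (T.front.bA.add p q) = T.front.vB.add (z2 p) (z2 q)
  z2_smul : ∀ t p, z2 (T.front.bA.smul t p) = T.front.vB.smul t (z2 p)

/-- A front-back linear double section `(X_{2,3}; X_2, X_3; X)`. -/
structure FBLinSec {E E12 E13 E23 E1 E2 E3 M : Type*}
    (T : TVB E E12 E13 E23 E1 E2 E3 M) where
  x23 : E23 → E
  x2 : E2 → E12
  x3 : E3 → E13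
  x : M → E1
  sec23 : ∀ p, T.up.vB.π (x23 p) = p
  over12 : ∀ p, T.back.vA.π (x23 p) = x2 (T.front.vA.π p)
  over13 : ∀ p, T.up.vA.π (x23 p) = x3 (T.front.vB.π p)
  sec2 : ∀ p, T.down.vB.π (x2 p) = p
  over2 : ∀ p, T.down.vA.π (x2 p) = x (T.down.bB.π p)
  sec3 : ∀ p, T.right.vB.π (x3 p) = p
  over3 : ∀ p, T.right.vA.π (x3 p) = x (T.right.bB.π p)
  secx : ∀ m, T.down.bA.π (x m) = m
  map_add2 : ∀ p q, T.front.vA.π p = T.front.vA.π q →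
    x23 (T.front.vA.add p q) = T.back.vA.add (x23 p) (x23 q)
  map_add3 : ∀ p q, T.front.vB.π p = T.front.vB.π q →
    x23 (T.front.vB.add p q) = T.up.vA.add (x23 p) (x23 q)
  map_smul2 : ∀ t p, x23 (T.front.vA.smul t p) = T.back.vA.smul t (x23 p)
  map_smul3 : ∀ t p, x23 (T.front.vB.smul t p) = T.up.vA.smul t (x23 p)
  x2_add : ∀ p q, T.down.bB.π p = T.down.bB.π q →
    x2 (T.down.bB.add p q) = T.down.vA.add (x2 p) (x2 q)
  x2_smul : ∀ t p, x2 (T.down.bB.smul t p) = T.down.vA.smul t (x2 p)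
  x3_add : ∀ p q, T.right.bB.π p = T.right.bB.π q →
    x3 (T.right.bB.add p q) = T.right.vA.add (x3 p) (x3 q)
  x3_smul : ∀ t p, x3 (T.right.bB.smul t p) = T.right.vA.smul t (x3 p)

/-- A right-left linear double section `(Y_{1,3}; Y_1, Y_3; Y)`. -/
structure RLLinSec {E E12 E13 E23 E1 E2 E3 M : Type*}
    (T : TVB E E12 E13 E23 E1 E2 E3 M) where
  y13 : E13 → E
  y1 : E1 → E12
  y3 : E3 → E23
  y : M → E2
  sec13 : ∀ p, T.up.vA.π (y13 p) = p
  over12 : ∀ p, T.back.vA.π (y13 p) = y1 (T.right.vA.π p)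
  over23 : ∀ p, T.up.vB.π (y13 p) = y3 (T.right.vB.π p)
  sec1 : ∀ p, T.down.vA.π (y1 p) = p
  over1 : ∀ p, T.down.vB.π (y1 p) = y (T.down.bA.π p)
  sec3 : ∀ p, T.front.vB.π (y3 p) = p
  over3 : ∀ p, T.front.vA.π (y3 p) = y (T.front.bB.π p)
  secy : ∀ m, T.down.bB.π (y m) = m
  map_add1 : ∀ p q, T.right.vA.π p = T.right.vA.π q →
    y13 (T.right.vA.add p q) = T.back.vA.add (y13 p) (y13 q)
  map_add3 : ∀ p q, T.right.vB.π p = T.right.vB.π q →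
    y13 (T.right.vB.add p q) = T.up.vB.add (y13 p) (y13 q)
  map_smul1 : ∀ t p, y13 (T.right.vA.smul t p) = T.back.vA.smul t (y13 p)
  map_smul3 : ∀ t p, y13 (T.right.vB.smul t p) = T.up.vB.smul t (y13 p)
  y1_add : ∀ p q, T.down.bA.π p = T.down.bA.π q →
    y1 (T.down.bA.add p q) = T.down.vB.add (y1 p) (y1 q)
  y1_smul : ∀ t p, y1 (T.down.bA.smul t p) = T.down.vB.smul t (y1 p)
  y3_add : ∀ p q, T.front.bB.π p = T.front.bB.π q →
    y3 (T.front.bB.add p q) = T.front.vA.add (y3 p) (y3 q)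
  y3_smul : ∀ t p, y3 (T.front.bB.smul t p) = T.front.vA.smul t (y3 p)

namespace PreVB
variable {Et Bt : Type*} (V : PreVB Et Bt)

theorem pi_sub {a b : Et} (h : V.π a = V.π b) : V.π (V.sub a b) = V.π a :=
  V.π_add a (V.neg b) (by rw [V.π_neg]; exact h)

theorem addZero {a : Et} {b : Bt} (h : V.π a = b) : V.add a (V.zero b) = a := by
  subst h; exact V.add_zero a

theorem zeroAdd {a : Et} {b : Bt} (h : V.π a = b) : V.add (V.zero b) a = a := by
  subst h; exact V.zero_add a

theorem negAdd (a : Et) : V.add (V.neg a) a = V.zero (V.π a) := by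
  rw [V.add_comm _ _ (V.π_neg a), V.add_neg]

theorem add_sub {a z : Et} (h : V.π a = V.π z) : V.add z (V.sub a z) = a := by
  show V.add z (V.add a (V.neg z)) = a
  rw [V.add_comm z _ (by rw [V.π_add a (V.neg z) (by rw [V.π_neg]; exact h)]; exact h.symm),
    V.add_assoc a (V.neg z) z (by rw [V.π_neg]; exact h) (V.π_neg z),
    V.negAdd, V.addZero h]

theorem sub_add {a z : Et} (h : V.π a = V.π z) : V.sub (V.add z a) z = a := by
  show V.add (V.add z a) (V.neg z) = a
  rw [V.add_comm z a h.symm, V.add_assoc a z (V.neg z) h (V.π_neg z).symm,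
    V.add_neg, V.addZero h]

theorem cancel {z a b : Et} (ha : V.π a = V.π z) (hb : V.π b = V.π z)
    (h : V.add z a = V.add z b) : a = b := by
  have ha' : V.add (V.neg z) (V.add z a) = a := by
    rw [← V.add_assoc (V.neg z) z a (V.π_neg z) ha.symm, V.negAdd, V.zeroAdd ha]
  have hb' : V.add (V.neg z) (V.add z b) = b := by
    rw [← V.add_assoc (V.neg z) z b (V.π_neg z) hb.symm, V.negAdd, V.zeroAdd hb]
  rw [← ha', ← hb', h]

end PreVB

/-- If `e, e'` in a triple vector bundle have exactly the same
outline, then there is a unique ultracore element `u` such that all six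
formulas of Proposition 3.1 (`Prop.~sameoutline`) hold, e.g.
`e -_{1,3} e' = 0̂_{e_{1,3}} +_{1,2} (0̂_{e_1} +_{2,3} u)
            = 0̂_{e_{1,3}} +_{2,3} (0̂_{e_3} +_{1,2} u)`, etc. -/
theorem tvb_same_outline_difference {E E12 E13 E23 E1 E2 E3 M : Type*}
    (T : TVB E E12 E13 E23 E1 E2 E3 M) (e e' : E)
    (h12 : T.back.vA.π e = T.back.vA.π e')
    (h13 : T.up.vA.π e = T.up.vA.π e')
    (h23 : T.up.vB.π e = T.up.vB.π e') :
    ∃! u : E,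
      T.UltracoreAt (T.down.bA.π (T.down.vA.π (T.back.vA.π e))) u ∧
      -- e -_{1,3} e'
      (T.up.vA.sub e e' =
        T.back.vA.add (T.up.vA.zero (T.up.vA.π e))
          (T.up.vB.add (T.zE1 (T.down.vA.π (T.back.vA.π e))) u)) ∧
      (T.up.vA.sub e e' =
        T.up.vB.add (T.up.vA.zero (T.up.vA.π e))
          (T.back.vA.add (T.zE3 (T.right.vB.π (T.up.vA.π e))) u)) ∧
      -- e -_{1,2} e'
      (T.back.vA.sub e e' =
        T.up.vA.add (T.back.vA.zero (T.back.vA.π e))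
          (T.up.vB.add (T.zE1 (T.down.vA.π (T.back.vA.π e))) u)) ∧
      (T.back.vA.sub e e' =
        T.up.vB.add (T.back.vA.zero (T.back.vA.π e))
          (T.up.vA.add (T.zE2 (T.down.vB.π (T.back.vA.π e))) u)) ∧
      -- e -_{2,3} e'
      (T.up.vB.sub e e' =
        T.up.vA.add (T.up.vB.zero (T.up.vB.π e))
          (T.back.vA.add (T.zE3 (T.right.vB.π (T.up.vA.π e))) u)) ∧
      (T.up.vB.sub e e' =
        T.back.vA.add (T.up.vB.zero (T.up.vB.π e))
          (T.up.vA.add (T.zE2 (T.down.vB.π (T.back.vA.π e))) u)) := by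
  have B1 := T.back.πB_addA
  have B2 := T.back.πA_addB
  have B3 := T.back.πB_negA
  have B4 := T.back.πA_negB
  have B5 := T.back.πB_zeroA
  have B6 := T.back.πA_zeroB
  have B7 := T.back.proj_compat
  have B8 := T.back.interchange
  simp only [← T.coh_E_E13, T.coh_E12_E1, T.coh_E13_E1] at B1 B2 B3 B4 B5 B6 B7 B8
  have U1 := T.up.πB_addA
  have U2 := T.up.πA_addB
  have U3 := T.up.πB_negA
  have U4 := T.up.πA_negB
  have U5 := T.up.πB_zeroA
  have U6 := T.up.πA_zeroB
  have U7 := T.up.proj_compat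
  have U8 := T.up.interchange
  simp only [T.coh_E13_E3, T.coh_E23_E3] at U1 U2 U3 U4 U5 U6 U7 U8
  have L1 := T.left.πB_addA
  have L2 := T.left.πA_addB
  have L3 := T.left.πB_negA
  have L4 := T.left.πA_negB
  have L5 := T.left.πB_zeroA
  have L6 := T.left.πA_zeroB
  have L7 := T.left.proj_compat
  have L8 := T.left.interchange
  simp only [← T.coh_E_E12, ← T.coh_E_E23, T.coh_E12_E2, T.coh_E23_E2] at L1 L2 L3 L4 L5 L6 L7 L8
  have D5 := T.down.πB_zeroA
  have D6 := T.down.πA_zeroB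
  have D7 := T.down.proj_compat
  have DZ := T.down.double_zero
  have R5 := T.right.πB_zeroA
  have R6 := T.right.πA_zeroB
  have R7 := T.right.proj_compat
  have RZ := T.right.double_zero
  simp only [← T.coh_E1_M] at R5 R6 R7 RZ
  have F6 := T.front.πA_zeroB
  simp only [← T.coh_E2_M, ← T.coh_E3_M] at F6
  have hZ1 : T.zE1 (T.down.vA.π (T.back.vA.π e)) = T.back.vA.zero (T.down.vA.zero (T.down.vA.π (T.back.vA.π e))) := rfl
  have hZ2 : T.zE2 (T.down.vB.π (T.back.vA.π e)) = T.back.vA.zero (T.down.vB.zero (T.down.vB.π (T.back.vA.π e))) := rfl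
  have hZ3 : T.zE3 (T.right.vB.π (T.up.vA.π e)) = T.up.vA.zero (T.right.vB.zero (T.right.vB.π (T.up.vA.π e))) := rfl
  have hZ1' : T.zE1 (T.down.vA.π (T.back.vA.π e)) = T.up.vA.zero (T.right.vA.zero (T.down.vA.π (T.back.vA.π e))) := by rw [hZ1]; exact T.zero_coh_E1 (T.down.vA.π (T.back.vA.π e))
  have hZ2' : T.zE2 (T.down.vB.π (T.back.vA.π e)) = T.up.vB.zero (T.front.vA.zero (T.down.vB.π (T.back.vA.π e))) := by rw [hZ2]; exact T.zero_coh_E2 (T.down.vB.π (T.back.vA.π e))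
  have hZ3' : T.zE3 (T.right.vB.π (T.up.vA.π e)) = T.up.vB.zero (T.front.vB.zero (T.right.vB.π (T.up.vA.π e))) := by rw [hZ3]; exact T.zero_coh_E3 (T.right.vB.π (T.up.vA.π e))
  have hB7e : T.right.vA.π (T.up.vA.π e) = (T.down.vA.π (T.back.vA.π e)) := (B7 e).symm
  have hU7e : T.front.vB.π (T.up.vB.π e) = (T.right.vB.π (T.up.vA.π e)) := (U7 e).symm
  have hL7e : T.front.vA.π (T.up.vB.π e) = (T.down.vB.π (T.back.vA.π e)) := (L7 e).symm
  have hm2 : T.down.bB.π (T.down.vB.π (T.back.vA.π e)) = (T.down.bA.π (T.down.vA.π (T.back.vA.π e))) := (D7 (T.back.vA.π e)).symm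
  have hm3 : T.right.bB.π (T.right.vB.π (T.up.vA.π e)) = (T.down.bA.π (T.down.vA.π (T.back.vA.π e))) := by rw [← R7 (T.up.vA.π e), hB7e]
  have hd13 : T.up.vA.π (T.up.vA.sub e e') = T.up.vA.π e := T.up.vA.pi_sub h13
  have hd12 : T.back.vA.π (T.up.vA.sub e e') = T.down.vA.zero (T.down.vA.π (T.back.vA.π e)) := by
    show T.back.vA.π (T.up.vA.add e (T.up.vA.neg e')) = T.down.vA.zero (T.down.vA.π (T.back.vA.π e))
    rw [B2 e (T.up.vA.neg e') (by rw [T.up.vA.π_neg]; exact h13), B4, ← h12, T.down.vA.add_neg]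
  have hd23 : T.up.vB.π (T.up.vA.sub e e') = T.front.vB.zero (T.right.vB.π (T.up.vA.π e)) := by
    show T.up.vB.π (T.up.vA.add e (T.up.vA.neg e')) = T.front.vB.zero (T.right.vB.π (T.up.vA.π e))
    rw [U1 e (T.up.vA.neg e') (by rw [T.up.vA.π_neg]; exact h13), U3, ← h23, T.front.vB.add_neg, hU7e]
  have hz13_13 : T.up.vA.π (T.up.vA.zero (T.up.vA.π e)) = T.up.vA.π e := T.up.vA.π_zero _
  have hz13_12 : T.back.vA.π (T.up.vA.zero (T.up.vA.π e)) = T.down.vA.zero (T.down.vA.π (T.back.vA.π e)) := by rw [B6, hB7e]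
  have hz13_23 : T.up.vB.π (T.up.vA.zero (T.up.vA.π e)) = T.front.vB.zero (T.right.vB.π (T.up.vA.π e)) := by rw [U5]
  have hw12 : T.back.vA.π (T.back.vA.sub (T.up.vA.sub e e') (T.up.vA.zero (T.up.vA.π e))) = T.down.vA.zero (T.down.vA.π (T.back.vA.π e)) := by
    rw [T.back.vA.pi_sub (hd12.trans hz13_12.symm), hd12]
  have hw13 : T.up.vA.π (T.back.vA.sub (T.up.vA.sub e e') (T.up.vA.zero (T.up.vA.π e))) = T.right.vA.zero (T.down.vA.π (T.back.vA.π e)) := by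
    show T.up.vA.π (T.back.vA.add (T.up.vA.sub e e') (T.back.vA.neg (T.up.vA.zero (T.up.vA.π e)))) = T.right.vA.zero (T.down.vA.π (T.back.vA.π e))
    rw [B1 (T.up.vA.sub e e') (T.back.vA.neg (T.up.vA.zero (T.up.vA.π e))) (by rw [T.back.vA.π_neg]; exact hd12.trans hz13_12.symm), B3,
      hd13, hz13_13, T.right.vA.add_neg, hB7e]
  have hw23 : T.up.vB.π (T.back.vA.sub (T.up.vA.sub e e') (T.up.vA.zero (T.up.vA.π e))) = T.front.vA.zero (T.down.bB.zero (T.down.bA.π (T.down.vA.π (T.back.vA.π e)))) := by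
    show T.up.vB.π (T.back.vA.add (T.up.vA.sub e e') (T.back.vA.neg (T.up.vA.zero (T.up.vA.π e)))) = T.front.vA.zero (T.down.bB.zero (T.down.bA.π (T.down.vA.π (T.back.vA.π e))))
    rw [L1 (T.up.vA.sub e e') (T.back.vA.neg (T.up.vA.zero (T.up.vA.π e))) (by rw [T.back.vA.π_neg]; exact hd12.trans hz13_12.symm), L3,
      hd23, hz13_23, T.front.vA.add_neg, F6, hm3]
  have hzE1_12 : T.back.vA.π (T.zE1 (T.down.vA.π (T.back.vA.π e))) = T.down.vA.zero (T.down.vA.π (T.back.vA.π e)) := by rw [hZ1, T.back.vA.π_zero]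
  have hzE1_13 : T.up.vA.π (T.zE1 (T.down.vA.π (T.back.vA.π e))) = T.right.vA.zero (T.down.vA.π (T.back.vA.π e)) := by rw [hZ1, B5, T.down.vA.π_zero]
  have hzE1_23 : T.up.vB.π (T.zE1 (T.down.vA.π (T.back.vA.π e))) = T.front.vA.zero (T.down.bB.zero (T.down.bA.π (T.down.vA.π (T.back.vA.π e)))) := by rw [hZ1, L5, D5]
  have hu23 : T.up.vB.π (T.up.vB.sub (T.back.vA.sub (T.up.vA.sub e e') (T.up.vA.zero (T.up.vA.π e))) (T.zE1 (T.down.vA.π (T.back.vA.π e)))) = T.front.vA.zero (T.down.bB.zero (T.down.bA.π (T.down.vA.π (T.back.vA.π e)))) := by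
    rw [T.up.vB.pi_sub (hw23.trans hzE1_23.symm), hw23]
  have hu12 : T.back.vA.π (T.up.vB.sub (T.back.vA.sub (T.up.vA.sub e e') (T.up.vA.zero (T.up.vA.π e))) (T.zE1 (T.down.vA.π (T.back.vA.π e)))) = T.down.vB.zero (T.down.bB.zero (T.down.bA.π (T.down.vA.π (T.back.vA.π e)))) := by
    show T.back.vA.π (T.up.vB.add (T.back.vA.sub (T.up.vA.sub e e') (T.up.vA.zero (T.up.vA.π e))) (T.up.vB.neg (T.zE1 (T.down.vA.π (T.back.vA.π e))))) = T.down.vB.zero (T.down.bB.zero (T.down.bA.π (T.down.vA.π (T.back.vA.π e))))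
    rw [L2 (T.back.vA.sub (T.up.vA.sub e e') (T.up.vA.zero (T.up.vA.π e))) (T.up.vB.neg (T.zE1 (T.down.vA.π (T.back.vA.π e)))) (by rw [T.up.vB.π_neg]; exact hw23.trans hzE1_23.symm), L4,
      hw12, hzE1_12, T.down.vB.add_neg, D5]
  have hu13 : T.up.vA.π (T.up.vB.sub (T.back.vA.sub (T.up.vA.sub e e') (T.up.vA.zero (T.up.vA.π e))) (T.zE1 (T.down.vA.π (T.back.vA.π e)))) = T.right.vB.zero (T.right.bB.zero (T.down.bA.π (T.down.vA.π (T.back.vA.π e)))) := by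
    show T.up.vA.π (T.up.vB.add (T.back.vA.sub (T.up.vA.sub e e') (T.up.vA.zero (T.up.vA.π e))) (T.up.vB.neg (T.zE1 (T.down.vA.π (T.back.vA.π e))))) = T.right.vB.zero (T.right.bB.zero (T.down.bA.π (T.down.vA.π (T.back.vA.π e))))
    rw [U2 (T.back.vA.sub (T.up.vA.sub e e') (T.up.vA.zero (T.up.vA.π e))) (T.up.vB.neg (T.zE1 (T.down.vA.π (T.back.vA.π e)))) (by rw [T.up.vB.π_neg]; exact hw23.trans hzE1_23.symm), U4,
      hw13, hzE1_13, T.right.vB.add_neg, R5]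
  have hucore : T.UltracoreAt (T.down.bA.π (T.down.vA.π (T.back.vA.π e))) (T.up.vB.sub (T.back.vA.sub (T.up.vA.sub e e') (T.up.vA.zero (T.up.vA.π e))) (T.zE1 (T.down.vA.π (T.back.vA.π e)))) := by
    refine ⟨?_, ?_, ?_⟩
    · rw [hu12, ← DZ]
    · rw [hu13, ← T.coh_E1_M, ← RZ]
    · rw [hu23, ← T.coh_E2_M]
  have hVw : T.up.vB.add (T.zE1 (T.down.vA.π (T.back.vA.π e))) (T.up.vB.sub (T.back.vA.sub (T.up.vA.sub e e') (T.up.vA.zero (T.up.vA.π e))) (T.zE1 (T.down.vA.π (T.back.vA.π e)))) = (T.back.vA.sub (T.up.vA.sub e e') (T.up.vA.zero (T.up.vA.π e))) := T.up.vB.add_sub (hw23.trans hzE1_23.symm)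
  have hE1 : T.up.vA.sub e e' = T.back.vA.add (T.up.vA.zero (T.up.vA.π e)) (T.up.vB.add (T.zE1 (T.down.vA.π (T.back.vA.π e))) (T.up.vB.sub (T.back.vA.sub (T.up.vA.sub e e') (T.up.vA.zero (T.up.vA.π e))) (T.zE1 (T.down.vA.π (T.back.vA.π e))))) := by
    rw [hVw]; exact (T.back.vA.add_sub (hd12.trans hz13_12.symm)).symm
  have hzE3_13 : T.up.vA.π (T.zE3 (T.right.vB.π (T.up.vA.π e))) = T.right.vB.zero (T.right.vB.π (T.up.vA.π e)) := by rw [hZ3, T.up.vA.π_zero]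
  have hzE3_23 : T.up.vB.π (T.zE3 (T.right.vB.π (T.up.vA.π e))) = T.front.vB.zero (T.right.vB.π (T.up.vA.π e)) := by rw [hZ3', T.up.vB.π_zero]
  have hzE3_12 : T.back.vA.π (T.zE3 (T.right.vB.π (T.up.vA.π e))) = T.down.vB.zero (T.down.bB.zero (T.down.bA.π (T.down.vA.π (T.back.vA.π e)))) := by rw [hZ3', L6, F6, hm3]
  have hzE2_12 : T.back.vA.π (T.zE2 (T.down.vB.π (T.back.vA.π e))) = T.down.vB.zero (T.down.vB.π (T.back.vA.π e)) := by rw [hZ2, T.back.vA.π_zero]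
  have hzE2_23 : T.up.vB.π (T.zE2 (T.down.vB.π (T.back.vA.π e))) = T.front.vA.zero (T.down.vB.π (T.back.vA.π e)) := by rw [hZ2', T.up.vB.π_zero]
  have hzE2_13 : T.up.vA.π (T.zE2 (T.down.vB.π (T.back.vA.π e))) = T.right.vB.zero (T.right.bB.zero (T.down.bA.π (T.down.vA.π (T.back.vA.π e)))) := by rw [hZ2, B5, D6, hm2, RZ]
  have hI2 := L8 (T.up.vA.zero (T.up.vA.π e)) (T.zE1 (T.down.vA.π (T.back.vA.π e))) (T.zE3 (T.right.vB.π (T.up.vA.π e))) (T.up.vB.sub (T.back.vA.sub (T.up.vA.sub e e') (T.up.vA.zero (T.up.vA.π e))) (T.zE1 (T.down.vA.π (T.back.vA.π e))))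
    (hz13_12.trans hzE1_12.symm) (hzE3_12.trans hu12.symm)
    (hz13_23.trans hzE3_23.symm) (hzE1_23.trans hu23.symm)
  have hz13zE1 : T.back.vA.add (T.up.vA.zero (T.up.vA.π e)) (T.zE1 (T.down.vA.π (T.back.vA.π e))) = (T.up.vA.zero (T.up.vA.π e)) := by
    rw [hZ1]; exact T.back.vA.addZero hz13_12
  have hz13zE3 : T.up.vB.add (T.up.vA.zero (T.up.vA.π e)) (T.zE3 (T.right.vB.π (T.up.vA.π e))) = (T.up.vA.zero (T.up.vA.π e)) := by
    rw [hZ3']; exact T.up.vB.addZero hz13_23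
  have hE2 : T.up.vA.sub e e' = T.up.vB.add (T.up.vA.zero (T.up.vA.π e)) (T.back.vA.add (T.zE3 (T.right.vB.π (T.up.vA.π e))) (T.up.vB.sub (T.back.vA.sub (T.up.vA.sub e e') (T.up.vA.zero (T.up.vA.π e))) (T.zE1 (T.down.vA.π (T.back.vA.π e))))) := by
    calc T.up.vA.sub e e'
        = T.back.vA.add (T.up.vB.add (T.up.vA.zero (T.up.vA.π e)) (T.zE3 (T.right.vB.π (T.up.vA.π e)))) (T.up.vB.add (T.zE1 (T.down.vA.π (T.back.vA.π e))) (T.up.vB.sub (T.back.vA.sub (T.up.vA.sub e e') (T.up.vA.zero (T.up.vA.π e))) (T.zE1 (T.down.vA.π (T.back.vA.π e))))) := by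
          rw [hz13zE3]; exact hE1
      _ = T.up.vB.add (T.back.vA.add (T.up.vA.zero (T.up.vA.π e)) (T.zE1 (T.down.vA.π (T.back.vA.π e)))) (T.back.vA.add (T.zE3 (T.right.vB.π (T.up.vA.π e))) (T.up.vB.sub (T.back.vA.sub (T.up.vA.sub e e') (T.up.vA.zero (T.up.vA.π e))) (T.zE1 (T.down.vA.π (T.back.vA.π e))))) := hI2.symm
      _ = T.up.vB.add (T.up.vA.zero (T.up.vA.π e)) (T.back.vA.add (T.zE3 (T.right.vB.π (T.up.vA.π e))) (T.up.vB.sub (T.back.vA.sub (T.up.vA.sub e e') (T.up.vA.zero (T.up.vA.π e))) (T.zE1 (T.down.vA.π (T.back.vA.π e))))) := by rw [hz13zE1]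
  have he'12 : T.back.vA.π e' = T.back.vA.π e := h12.symm
  have hz12_12 : T.back.vA.π (T.back.vA.zero (T.back.vA.π e)) = T.back.vA.π e := T.back.vA.π_zero _
  have hz12_13 : T.up.vA.π (T.back.vA.zero (T.back.vA.π e)) = T.right.vA.zero (T.down.vA.π (T.back.vA.π e)) := by rw [B5]
  have hz12_23 : T.up.vB.π (T.back.vA.zero (T.back.vA.π e)) = T.front.vA.zero (T.down.vB.π (T.back.vA.π e)) := by rw [L5]
  have hV12 : T.back.vA.π (T.up.vB.add (T.zE1 (T.down.vA.π (T.back.vA.π e))) (T.up.vB.sub (T.back.vA.sub (T.up.vA.sub e e') (T.up.vA.zero (T.up.vA.π e))) (T.zE1 (T.down.vA.π (T.back.vA.π e))))) = T.down.vA.zero (T.down.vA.π (T.back.vA.π e)) := by rw [hVw]; exact hw12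
  have hV13 : T.up.vA.π (T.up.vB.add (T.zE1 (T.down.vA.π (T.back.vA.π e))) (T.up.vB.sub (T.back.vA.sub (T.up.vA.sub e e') (T.up.vA.zero (T.up.vA.π e))) (T.zE1 (T.down.vA.π (T.back.vA.π e))))) = T.right.vA.zero (T.down.vA.π (T.back.vA.π e)) := by rw [hVw]; exact hw13
  have heE : e = T.up.vA.add e' (T.back.vA.add (T.up.vA.zero (T.up.vA.π e)) (T.up.vB.add (T.zE1 (T.down.vA.π (T.back.vA.π e))) (T.up.vB.sub (T.back.vA.sub (T.up.vA.sub e e') (T.up.vA.zero (T.up.vA.π e))) (T.zE1 (T.down.vA.π (T.back.vA.π e)))))) := by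
    rw [← hE1]; exact (T.up.vA.add_sub h13).symm
  have hI3 := B8 e' (T.back.vA.zero (T.back.vA.π e)) (T.up.vA.zero (T.up.vA.π e)) (T.up.vB.add (T.zE1 (T.down.vA.π (T.back.vA.π e))) (T.up.vB.sub (T.back.vA.sub (T.up.vA.sub e e') (T.up.vA.zero (T.up.vA.π e))) (T.zE1 (T.down.vA.π (T.back.vA.π e)))))
    (he'12.trans hz12_12.symm) (hz13_12.trans hV12.symm)
    (h13.symm.trans hz13_13.symm) (hz12_13.trans hV13.symm)
  have he'z12 : T.back.vA.add e' (T.back.vA.zero (T.back.vA.π e)) = e' := T.back.vA.addZero he'12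
  have he'z13 : T.up.vA.add e' (T.up.vA.zero (T.up.vA.π e)) = e' := T.up.vA.addZero h13.symm
  rw [he'z12, he'z13] at hI3
  have heE3 : e = T.back.vA.add e' (T.up.vA.add (T.back.vA.zero (T.back.vA.π e)) (T.up.vB.add (T.zE1 (T.down.vA.π (T.back.vA.π e))) (T.up.vB.sub (T.back.vA.sub (T.up.vA.sub e e') (T.up.vA.zero (T.up.vA.π e))) (T.zE1 (T.down.vA.π (T.back.vA.π e)))))) := heE.trans hI3
  have hX12 : T.back.vA.π (T.up.vA.add (T.back.vA.zero (T.back.vA.π e)) (T.up.vB.add (T.zE1 (T.down.vA.π (T.back.vA.π e))) (T.up.vB.sub (T.back.vA.sub (T.up.vA.sub e e') (T.up.vA.zero (T.up.vA.π e))) (T.zE1 (T.down.vA.π (T.back.vA.π e)))))) = T.back.vA.π e' := by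
    rw [B2 (T.back.vA.zero (T.back.vA.π e)) _ (hz12_13.trans hV13.symm), hz12_12, hV12, T.down.vA.addZero rfl, h12]
  have hE3 : T.back.vA.sub e e' = T.up.vA.add (T.back.vA.zero (T.back.vA.π e)) (T.up.vB.add (T.zE1 (T.down.vA.π (T.back.vA.π e))) (T.up.vB.sub (T.back.vA.sub (T.up.vA.sub e e') (T.up.vA.zero (T.up.vA.π e))) (T.zE1 (T.down.vA.π (T.back.vA.π e))))) := by
    calc T.back.vA.sub e e'
        = T.back.vA.sub (T.back.vA.add e' (T.up.vA.add (T.back.vA.zero (T.back.vA.π e)) (T.up.vB.add (T.zE1 (T.down.vA.π (T.back.vA.π e))) (T.up.vB.sub (T.back.vA.sub (T.up.vA.sub e e') (T.up.vA.zero (T.up.vA.π e))) (T.zE1 (T.down.vA.π (T.back.vA.π e))))))) e' := by rw [← heE3]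
      _ = _ := T.back.vA.sub_add hX12
  have hI4 := U8 (T.back.vA.zero (T.back.vA.π e)) (T.zE1 (T.down.vA.π (T.back.vA.π e))) (T.zE2 (T.down.vB.π (T.back.vA.π e))) (T.up.vB.sub (T.back.vA.sub (T.up.vA.sub e e') (T.up.vA.zero (T.up.vA.π e))) (T.zE1 (T.down.vA.π (T.back.vA.π e))))
    (hz12_13.trans hzE1_13.symm) (hzE2_13.trans hu13.symm)
    (hz12_23.trans hzE2_23.symm) (hzE1_23.trans hu23.symm)
  have hz12zE1 : T.up.vA.add (T.back.vA.zero (T.back.vA.π e)) (T.zE1 (T.down.vA.π (T.back.vA.π e))) = (T.back.vA.zero (T.back.vA.π e)) := by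
    rw [hZ1']; exact T.up.vA.addZero hz12_13
  have hz12zE2 : T.up.vB.add (T.back.vA.zero (T.back.vA.π e)) (T.zE2 (T.down.vB.π (T.back.vA.π e))) = (T.back.vA.zero (T.back.vA.π e)) := by
    rw [hZ2']; exact T.up.vB.addZero hz12_23
  rw [hz12zE1, hz12zE2] at hI4
  have hE4 : T.back.vA.sub e e' = T.up.vB.add (T.back.vA.zero (T.back.vA.π e)) (T.up.vA.add (T.zE2 (T.down.vB.π (T.back.vA.π e))) (T.up.vB.sub (T.back.vA.sub (T.up.vA.sub e e') (T.up.vA.zero (T.up.vA.π e))) (T.zE1 (T.down.vA.π (T.back.vA.π e))))) := hE3.trans hI4.symm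
  have heE' : e = T.up.vA.add e' (T.up.vB.add (T.up.vA.zero (T.up.vA.π e)) (T.back.vA.add (T.zE3 (T.right.vB.π (T.up.vA.π e))) (T.up.vB.sub (T.back.vA.sub (T.up.vA.sub e e') (T.up.vA.zero (T.up.vA.π e))) (T.zE1 (T.down.vA.π (T.back.vA.π e)))))) := by
    rw [← hE2]; exact (T.up.vA.add_sub h13).symm
  have hz23_23 : T.up.vB.π (T.up.vB.zero (T.up.vB.π e)) = T.up.vB.π e := T.up.vB.π_zero _
  have hz23_13 : T.up.vA.π (T.up.vB.zero (T.up.vB.π e)) = T.right.vB.zero (T.right.vB.π (T.up.vA.π e)) := by rw [U6, hU7e]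
  have hz23_12 : T.back.vA.π (T.up.vB.zero (T.up.vB.π e)) = T.down.vB.zero (T.down.vB.π (T.back.vA.π e)) := by rw [L6, hL7e]
  have hW13 : T.up.vA.π (T.back.vA.add (T.zE3 (T.right.vB.π (T.up.vA.π e))) (T.up.vB.sub (T.back.vA.sub (T.up.vA.sub e e') (T.up.vA.zero (T.up.vA.π e))) (T.zE1 (T.down.vA.π (T.back.vA.π e))))) = T.right.vB.zero (T.right.vB.π (T.up.vA.π e)) := by
    rw [B1 _ _ (hzE3_12.trans hu12.symm), hzE3_13, hu13, ← RZ, ← hm3, ← R6]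
    exact T.right.vA.add_zero _
  have hW23 : T.up.vB.π (T.back.vA.add (T.zE3 (T.right.vB.π (T.up.vA.π e))) (T.up.vB.sub (T.back.vA.sub (T.up.vA.sub e e') (T.up.vA.zero (T.up.vA.π e))) (T.zE1 (T.down.vA.π (T.back.vA.π e))))) = T.front.vB.zero (T.right.vB.π (T.up.vA.π e)) := by
    rw [L1 _ _ (hzE3_12.trans hu12.symm), hzE3_23, hu23, ← hm3, ← F6]
    exact T.front.vA.add_zero _
  have hI5 := U8 e' (T.up.vA.zero (T.up.vA.π e)) (T.up.vB.zero (T.up.vB.π e)) (T.back.vA.add (T.zE3 (T.right.vB.π (T.up.vA.π e))) (T.up.vB.sub (T.back.vA.sub (T.up.vA.sub e e') (T.up.vA.zero (T.up.vA.π e))) (T.zE1 (T.down.vA.π (T.back.vA.π e)))))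
    (h13.symm.trans hz13_13.symm) (hz23_13.trans hW13.symm)
    (h23.symm.trans hz23_23.symm) (hz13_23.trans hW23.symm)
  have he'z23 : T.up.vB.add e' (T.up.vB.zero (T.up.vB.π e)) = e' := T.up.vB.addZero h23.symm
  rw [he'z13, he'z23] at hI5
  have heE5 : e = T.up.vB.add e' (T.up.vA.add (T.up.vB.zero (T.up.vB.π e)) (T.back.vA.add (T.zE3 (T.right.vB.π (T.up.vA.π e))) (T.up.vB.sub (T.back.vA.sub (T.up.vA.sub e e') (T.up.vA.zero (T.up.vA.π e))) (T.zE1 (T.down.vA.π (T.back.vA.π e)))))) := heE'.trans hI5.symm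
  have hY23 : T.up.vB.π (T.up.vA.add (T.up.vB.zero (T.up.vB.π e)) (T.back.vA.add (T.zE3 (T.right.vB.π (T.up.vA.π e))) (T.up.vB.sub (T.back.vA.sub (T.up.vA.sub e e') (T.up.vA.zero (T.up.vA.π e))) (T.zE1 (T.down.vA.π (T.back.vA.π e)))))) = T.up.vB.π e' := by
    rw [U1 _ _ (hz23_13.trans hW13.symm), hz23_23, hW23, ← hU7e, T.front.vB.add_zero]
    exact h23
  have hE5 : T.up.vB.sub e e' = T.up.vA.add (T.up.vB.zero (T.up.vB.π e)) (T.back.vA.add (T.zE3 (T.right.vB.π (T.up.vA.π e))) (T.up.vB.sub (T.back.vA.sub (T.up.vA.sub e e') (T.up.vA.zero (T.up.vA.π e))) (T.zE1 (T.down.vA.π (T.back.vA.π e))))) := by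
    calc T.up.vB.sub e e'
        = T.up.vB.sub (T.up.vB.add e' (T.up.vA.add (T.up.vB.zero (T.up.vB.π e)) (T.back.vA.add (T.zE3 (T.right.vB.π (T.up.vA.π e))) (T.up.vB.sub (T.back.vA.sub (T.up.vA.sub e e') (T.up.vA.zero (T.up.vA.π e))) (T.zE1 (T.down.vA.π (T.back.vA.π e))))))) e' := by rw [← heE5]
      _ = _ := T.up.vB.sub_add hY23
  have hI6 := B8 (T.up.vB.zero (T.up.vB.π e)) (T.zE2 (T.down.vB.π (T.back.vA.π e))) (T.zE3 (T.right.vB.π (T.up.vA.π e))) (T.up.vB.sub (T.back.vA.sub (T.up.vA.sub e e') (T.up.vA.zero (T.up.vA.π e))) (T.zE1 (T.down.vA.π (T.back.vA.π e))))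
    (hz23_12.trans hzE2_12.symm) (hzE3_12.trans hu12.symm)
    (hz23_13.trans hzE3_13.symm) (hzE2_13.trans hu13.symm)
  have hz23zE2 : T.back.vA.add (T.up.vB.zero (T.up.vB.π e)) (T.zE2 (T.down.vB.π (T.back.vA.π e))) = (T.up.vB.zero (T.up.vB.π e)) := by
    rw [hZ2]; exact T.back.vA.addZero hz23_12
  have hz23zE3 : T.up.vA.add (T.up.vB.zero (T.up.vB.π e)) (T.zE3 (T.right.vB.π (T.up.vA.π e))) = (T.up.vB.zero (T.up.vB.π e)) := by
    rw [hZ3]; exact T.up.vA.addZero hz23_13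
  rw [hz23zE2, hz23zE3] at hI6
  have hE6 : T.up.vB.sub e e' = T.back.vA.add (T.up.vB.zero (T.up.vB.π e)) (T.up.vA.add (T.zE2 (T.down.vB.π (T.back.vA.π e))) (T.up.vB.sub (T.back.vA.sub (T.up.vA.sub e e') (T.up.vA.zero (T.up.vA.π e))) (T.zE1 (T.down.vA.π (T.back.vA.π e))))) := hE5.trans hI6
  refine ⟨(T.up.vB.sub (T.back.vA.sub (T.up.vA.sub e e') (T.up.vA.zero (T.up.vA.π e))) (T.zE1 (T.down.vA.π (T.back.vA.π e)))), ⟨hucore, hE1, hE2, hE3, hE4, hE5, hE6⟩, ?_⟩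
  rintro u' ⟨hu', hq1, -, -, -, -, -⟩
  have h'23 : T.up.vB.π u' = T.front.vA.zero (T.down.bB.zero (T.down.bA.π (T.down.vA.π (T.back.vA.π e)))) := by
    have h := hu'.2.2
    rw [← T.coh_E2_M] at h
    exact h
  have hπ' : T.back.vA.π (T.up.vB.add (T.zE1 (T.down.vA.π (T.back.vA.π e))) u') = T.down.vA.zero (T.down.vA.π (T.back.vA.π e)) := by
    rw [L2 _ _ (hzE1_23.trans h'23.symm), hzE1_12, hu'.1, DZ, ← D5, T.down.vB.add_zero]
  have hstep : T.up.vB.add (T.zE1 (T.down.vA.π (T.back.vA.π e))) u' = T.up.vB.add (T.zE1 (T.down.vA.π (T.back.vA.π e))) (T.up.vB.sub (T.back.vA.sub (T.up.vA.sub e e') (T.up.vA.zero (T.up.vA.π e))) (T.zE1 (T.down.vA.π (T.back.vA.π e)))) :=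
    T.back.vA.cancel (hπ'.trans hz13_12.symm) (hV12.trans hz13_12.symm) (hq1.symm.trans hE1)
  exact T.up.vB.cancel (h'23.trans hzE1_23.symm) (hu23.trans hzE1_23.symm) hstep
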